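/- Let 1 ≤ k ≤ n and let f : {-1,1}^n → ℝ be odd with ‖f‖_∞ = M > 0. Then there exist a subset T ⊆ [n] with |T| ≤ k and a fixing b ∈ {-1,1}^{T̄} such that Var(f_{T|b}) ≥ M²k/(4n²). -/

import Mathlib

open Finset

noncomputable section

/-- sign of a bit: `true` ↦ -1 (representing the bit -1), `false` ↦ 1. -/
def bsgn (b : Bool) : ℝ := if b then -1 else 1

/-- character χ_S(x) = ∏_{i ∈ S} x_i on the cube {-1,1}^n. -/
def chiCube {n : ℕ} (S : Finset (Fin n)) (x : Fin n → Bool) : ℝ := ∏ i ∈ S, bsgn (x i)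

/-- expectation under the uniform distribution on a finite type. -/
def expec {α : Type*} [Fintype α] (f : α → ℝ) : ℝ := (∑ x, f x) / (Fintype.card α)

/-- Fourier coefficient f̂(S) = E_x[f(x)·χ_S(x)]. -/
def fhat {n : ℕ} (f : (Fin n → Bool) → ℝ) (S : Finset (Fin n)) : ℝ :=
  expec fun x => f x * chiCube S x

/-- variance under the uniform distribution. -/
def cubeVar {α : Type*} [Fintype α] (f : α → ℝ) : ℝ :=
  expec (fun x => f x ^ 2) - (expec f) ^ 2

/-- merge: equals `x` on `J` and `z` off `J`. -/
def mergeOn {n : ℕ} (J : Finset (Fin n)) (x z : Fin n → Bool) : Fin n → Bool :=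
  fun i => if i ∈ J then x i else z i

namespace Stmt11

variable {n : ℕ}

local notation "X" => (Fin n → Bool)

lemma cardX : (Fintype.card X : ℝ) = 2 ^ n := by
  simp [Fintype.card_fun]

lemma cardX_pos : (0:ℝ) < (Fintype.card X : ℝ) := by
  rw [cardX]; positivity

lemma expec_add (f g : X → ℝ) : expec (fun x => f x + g x) = expec f + expec g := by
  simp [expec, Finset.sum_add_distrib, add_div]

lemma expec_sub (f g : X → ℝ) : expec (fun x => f x - g x) = expec f - expec g := by
  simp [expec, Finset.sum_sub_distrib, div_sub_div_same]

lemma expec_const (c : ℝ) : expec (fun _ : X => c) = c := by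
  have := cardX_pos (n := n)
  rw [expec, Finset.sum_const, nsmul_eq_mul]
  field_simp
  rw [Finset.card_univ]; ring

lemma expec_mul_const (f : X → ℝ) (c : ℝ) :
    expec (fun x => f x * c) = expec f * c := by
  simp [expec, ← Finset.sum_mul, div_mul_eq_mul_div]

lemma expec_nonneg {f : X → ℝ} (h : ∀ x, 0 ≤ f x) : 0 ≤ expec f := by
  have : (0:ℝ) ≤ ∑ x : X, f x := Finset.sum_nonneg (fun x _ => h x)
  exact div_nonneg this (le_of_lt cardX_pos)

lemma expec_var_identity (g : X → ℝ) :
    expec (fun x => g x ^ 2) - (expec g) ^ 2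
      = expec (fun x => (g x - expec g) ^ 2) := by
  have h1 : (fun x : X => (g x - expec g) ^ 2)
      = fun x => (g x ^ 2 - g x * (2 * expec g)) + expec g ^ 2 := by
    funext x; ring
  rw [h1, expec_add, expec_sub, expec_mul_const, expec_const]
  ring

lemma sq_expec_le_expec_sq (g : X → ℝ) : (expec g) ^ 2 ≤ expec (fun x => g x ^ 2) := by
  have h := expec_nonneg (f := fun x => (g x - expec g)^2) (fun x => sq_nonneg _)
  rw [← expec_var_identity] at h
  linarith

lemma exists_ge_expec (g : X → ℝ) : ∃ x : X, expec g ≤ g x := by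
  by_contra h
  push_neg at h
  have hsum : ∑ x : X, g x < ∑ _x : X, expec g := by
    apply Finset.sum_lt_sum_of_nonempty Finset.univ_nonempty
    intro i _
    exact h i
  rw [Finset.sum_const, nsmul_eq_mul] at hsum
  have : expec g * (Fintype.card X : ℝ) < (Fintype.card X : ℝ) * expec g := by
    calc expec g * (Fintype.card X : ℝ) = ∑ x : X, g x := by
          rw [expec]; field_simp
      _ < (Fintype.card X : ℝ) * expec g := hsum
  linarith [this]

/-- flip coordinate i -/
def flip (i : Fin n) (x : X) : X := Function.update x i (!(x i))

lemma flip_invol (i : Fin n) : Function.Involutive (flip (n := n) i) := by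
  intro x
  funext j
  by_cases h : j = i
  · subst h; simp [flip]
  · simp [flip, Function.update_of_ne h]

/-- key splitting identity for sums over the cube -/
lemma sum_split (G : X → ℝ) (i : Fin n) :
    2 * ∑ x : X, G x
      = (∑ x : X, G (Function.update x i false)) + ∑ x : X, G (Function.update x i true) := by
  have h1 : ∀ x : X, G (Function.update x i false) + G (Function.update x i true)
      = G x + G (flip i x) := by
    intro x
    cases h : x i
    · rw [show Function.update x i false = x by
        conv_rhs => rw [← Function.update_eq_self i x]; rw [h]]
      simp [flip, h]
    · rw [show Function.update x i true = x by
        conv_rhs => rw [← Function.update_eq_self i x]; rw [h]]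
      simp [flip, h]
      ring
  rw [← Finset.sum_add_distrib]
  have h2 : ∑ x : X, (G (Function.update x i false) + G (Function.update x i true))
      = ∑ x : X, (G x + G (flip i x)) := by
    apply Finset.sum_congr rfl; intro x _; exact h1 x
  rw [h2, Finset.sum_add_distrib]
  have h3 : ∑ x : X, G (flip i x) = ∑ x : X, G x :=
    Fintype.sum_equiv ((flip_invol i).toPerm _) _ _ (fun x => rfl)
  rw [h3]; ring

lemma expec_split (G : X → ℝ) (i : Fin n) :
    expec G = (expec (fun x => G (Function.update x i false))
      + expec (fun x => G (Function.update x i true))) / 2 := by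
  have h := sum_split G i
  have hc := cardX_pos (n := n)
  rw [expec, expec, expec, ← add_div]
  rw [eq_div_iff (by norm_num : (2:ℝ) ≠ 0), div_mul_eq_mul_div]
  rw [div_eq_div_iff (ne_of_gt cardX_pos) (ne_of_gt cardX_pos)]
  ring_nf
  nlinarith [h]

end Stmt11

namespace Stmt11

variable {n : ℕ}

local notation "X" => (Fin n → Bool)

/-- mean of `H` over the subcube with free coordinates `F`, based at `b`. -/
def eOn (F : Finset (Fin n)) (b : X) (H : X → ℝ) : ℝ :=
  expec (fun x => H (mergeOn F x b))

/-- variance of `H` over the subcube with free coordinates `F`, based at `b`. -/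
def vOn (F : Finset (Fin n)) (b : X) (H : X → ℝ) : ℝ :=
  eOn F b (fun y => H y ^ 2) - (eOn F b H) ^ 2

lemma vOn_eq_cubeVar (F : Finset (Fin n)) (b : X) (H : X → ℝ) :
    cubeVar (fun x => H (mergeOn F x b)) = vOn F b H := rfl

lemma mergeOn_empty (x b : X) : mergeOn ∅ x b = b := by
  funext j; simp [mergeOn]

lemma mergeOn_univ (x b : X) : mergeOn Finset.univ x b = x := by
  funext j; simp [mergeOn]

lemma mergeOn_update_left {F : Finset (Fin n)} {i : Fin n} (hi : i ∈ F) (x b : X) (c : Bool) :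
    mergeOn F (Function.update x i c) b = mergeOn (F.erase i) x (Function.update b i c) := by
  funext j
  by_cases hj : j = i
  · subst hj; simp [mergeOn, hi]
  · simp [mergeOn, Function.update_of_ne hj, Finset.mem_erase, hj]

lemma mergeOn_update_base {F : Finset (Fin n)} {i : Fin n} (hi : i ∉ F) (x b : X) (c : Bool) :
    mergeOn F x (Function.update b i c) = Function.update (mergeOn F x b) i c := by
  funext j
  by_cases hj : j = i
  · subst hj; simp [mergeOn, hi]
  · simp [mergeOn, Function.update_of_ne hj]

lemma mergeOn_apply_not_mem {F : Finset (Fin n)} {i : Fin n} (hi : i ∉ F) (x b : X) :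
    mergeOn F x b i = b i := by simp [mergeOn, hi]

lemma mergeOn_base_irrel {F : Finset (Fin n)} {i : Fin n} (hi : i ∈ F) (x b : X) (c : Bool) :
    mergeOn F x (Function.update b i c) = mergeOn F x b := by
  funext j
  by_cases hj : j = i
  · subst hj; simp [mergeOn, hi]
  · simp [mergeOn, Function.update_of_ne hj]

lemma eOn_base_update {F : Finset (Fin n)} {i : Fin n} (hi : i ∈ F) (b : X) (c : Bool)
    (H : X → ℝ) : eOn F (Function.update b i c) H = eOn F b H := by
  unfold eOn
  congr 1
  funext x
  rw [mergeOn_base_irrel hi]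

lemma eOn_empty (b : X) (H : X → ℝ) : eOn ∅ b H = H b := by
  unfold eOn
  have : (fun x : X => H (mergeOn ∅ x b)) = fun _ : X => H b := by
    funext x; rw [mergeOn_empty]
  rw [this, expec_const]

lemma eOn_univ (b : X) (H : X → ℝ) : eOn Finset.univ b H = expec H := by
  unfold eOn
  congr 1
  funext x
  rw [mergeOn_univ]

/-- fundamental splitting of a subcube mean along a free coordinate -/
lemma eOn_split {F : Finset (Fin n)} {i : Fin n} (hi : i ∈ F) (b : X) (H : X → ℝ) :
    eOn F b H = (eOn (F.erase i) (Function.update b i false) H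
      + eOn (F.erase i) (Function.update b i true) H) / 2 := by
  unfold eOn
  rw [expec_split (fun x => H (mergeOn F x b)) i]
  congr 2
  all_goals
    congr 1
    funext x
    rw [mergeOn_update_left hi]

lemma vOn_nonneg (F : Finset (Fin n)) (b : X) (H : X → ℝ) : 0 ≤ vOn F b H := by
  have := sq_expec_le_expec_sq (fun x => H (mergeOn F x b))
  unfold vOn eOn
  linarith [this]

lemma vOn_empty (b : X) (H : X → ℝ) : vOn ∅ b H = 0 := by
  unfold vOn
  rw [eOn_empty, eOn_empty]
  ring

/-- the degree-one coefficient (half the difference of the two halves' means). -/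
def dOn (i : Fin n) (F : Finset (Fin n)) (b : X) (H : X → ℝ) : ℝ :=
  (eOn (F.erase i) (Function.update b i false) H
    - eOn (F.erase i) (Function.update b i true) H) / 2

/-- law of total variance along one coordinate. -/
lemma vOn_split {F : Finset (Fin n)} {i : Fin n} (hi : i ∈ F) (b : X) (H : X → ℝ) :
    vOn F b H = (vOn (F.erase i) (Function.update b i false) H
      + vOn (F.erase i) (Function.update b i true) H) / 2 + (dOn i F b H) ^ 2 := by
  unfold vOn dOn
  rw [eOn_split hi b H, eOn_split hi b (fun y => H y ^ 2)]
  ring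

end Stmt11

namespace Stmt11

variable {n : ℕ}

local notation "X" => (Fin n → Bool)

lemma dOn_split {G : Finset (Fin n)} {i j : Fin n} (hiG : i ∉ G) (hj : j ∈ G) (b : X)
    (H : X → ℝ) :
    dOn j (insert i G) b H
      = (dOn j G (Function.update b i false) H + dOn j G (Function.update b i true) H) / 2 := by
  have hij : j ≠ i := fun h => hiG (h ▸ hj)
  have herase : (insert i G).erase j = insert i (G.erase j) :=
    Finset.erase_insert_of_ne hij.symm
  have hiGe : i ∈ insert i (G.erase j) := Finset.mem_insert_self _ _
  have hie : i ∉ G.erase j := fun h => hiG (Finset.mem_of_mem_erase h)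
  have hee : (insert i (G.erase j)).erase i = G.erase j := Finset.erase_insert hie
  unfold dOn
  rw [herase]
  rw [eOn_split hiGe (Function.update b j false) H,
      eOn_split hiGe (Function.update b j true) H, hee]
  rw [Function.update_comm hij.symm false false b,
      Function.update_comm hij.symm true false b,
      Function.update_comm hij.symm false true b,
      Function.update_comm hij.symm true true b]
  ring

/-- Bessel's inequality for the degree-one coefficients. -/
lemma bessel (F : Finset (Fin n)) (b : X) (H : X → ℝ) :
    ∑ j ∈ F, (dOn j F b H) ^ 2 ≤ vOn F b H := by
  induction F using Finset.induction_on generalizing b with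
  | empty => simp [vOn_empty]
  | @insert i G hiG ih =>
    rw [Finset.sum_insert hiG]
    have hins : i ∈ insert i G := Finset.mem_insert_self _ _
    have he : (insert i G).erase i = G := Finset.erase_insert hiG
    have hsplit := vOn_split hins b H
    rw [he] at hsplit
    have hsum : ∑ j ∈ G, (dOn j (insert i G) b H) ^ 2
        ≤ (∑ j ∈ G, (dOn j G (Function.update b i false) H) ^ 2
          + ∑ j ∈ G, (dOn j G (Function.update b i true) H) ^ 2) / 2 := by
      rw [← Finset.sum_add_distrib, Finset.sum_div]
      apply Finset.sum_le_sum
      intro j hj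
      rw [dOn_split hiG hj]
      nlinarith [sq_nonneg (dOn j G (Function.update b i false) H
        - dOn j G (Function.update b i true) H)]
    have h1 := ih (Function.update b i false)
    have h2 := ih (Function.update b i true)
    have hd : dOn i (insert i G) b H
        = (eOn G (Function.update b i false) H - eOn G (Function.update b i true) H) / 2 := by
      unfold dOn; rw [he]
    rw [hsplit]
    calc dOn i (insert i G) b H ^ 2 + ∑ j ∈ G, dOn j (insert i G) b H ^ 2
        ≤ dOn i (insert i G) b H ^ 2
          + (vOn G (Function.update b i false) H + vOn G (Function.update b i true) H) / 2 := by
          linarith [hsum]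
      _ = (vOn G (Function.update b i false) H + vOn G (Function.update b i true) H) / 2
          + dOn i (insert i G) b H ^ 2 := by ring
      _ ≤ _ := le_refl _

end Stmt11

namespace Stmt11

variable {n : ℕ}

local notation "X" => (Fin n → Bool)

/-- influence of coordinate `j` within the subcube `(F, b)`. -/
def iOn (j : Fin n) (F : Finset (Fin n)) (b : X) (H : X → ℝ) : ℝ :=
  eOn F b (fun y => (H y - H (Function.update y j (!(y j)))) ^ 2) / 4

lemma iOn_split {G : Finset (Fin n)} {i : Fin n} (hiG : i ∉ G) (j : Fin n) (b : X)
    (H : X → ℝ) :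
    iOn j (insert i G) b H
      = (iOn j G (Function.update b i false) H + iOn j G (Function.update b i true) H) / 2 := by
  unfold iOn
  rw [eOn_split (Finset.mem_insert_self i G) b, Finset.erase_insert hiG]
  ring

lemma flip_merged {G : Finset (Fin n)} {i : Fin n} (hiG : i ∉ G) (x b : X) (c c' : Bool) :
    Function.update (mergeOn G x (Function.update b i c)) i c'
      = mergeOn G x (Function.update b i c') := by
  rw [← mergeOn_update_base hiG, Function.update_idem]

lemma dsq_le_iOn {G : Finset (Fin n)} {i : Fin n} (hiG : i ∉ G) (b : X) (H : X → ℝ) :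
    (dOn i (insert i G) b H) ^ 2 ≤ iOn i (insert i G) b H := by
  have he : (insert i G).erase i = G := Finset.erase_insert hiG
  have happ : ∀ (x : X) (c : Bool), mergeOn G x (Function.update b i c) i = c := by
    intro x c; rw [mergeOn_apply_not_mem hiG]; simp
  have hiOn : iOn i (insert i G) b H
      = expec (fun x => (H (mergeOn G x (Function.update b i false))
          - H (mergeOn G x (Function.update b i true))) ^ 2) / 4 := by
    unfold iOn
    rw [eOn_split (Finset.mem_insert_self i G) b, he]
    have e1 : eOn G (Function.update b i false)
        (fun y => (H y - H (Function.update y i (!(y i)))) ^ 2)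
        = expec (fun x => (H (mergeOn G x (Function.update b i false))
            - H (mergeOn G x (Function.update b i true))) ^ 2) := by
      unfold eOn
      congr 1
      funext x
      show (H (mergeOn G x (Function.update b i false))
          - H (Function.update (mergeOn G x (Function.update b i false)) i
              (!(mergeOn G x (Function.update b i false) i)))) ^ 2 = _
      rw [happ x false, flip_merged hiG]
      norm_num
    have e2 : eOn G (Function.update b i true)
        (fun y => (H y - H (Function.update y i (!(y i)))) ^ 2)
        = expec (fun x => (H (mergeOn G x (Function.update b i false))
            - H (mergeOn G x (Function.update b i true))) ^ 2) := by
      unfold eOn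
      congr 1
      funext x
      show (H (mergeOn G x (Function.update b i true))
          - H (Function.update (mergeOn G x (Function.update b i true)) i
              (!(mergeOn G x (Function.update b i true) i)))) ^ 2 = _
      rw [happ x true, flip_merged hiG]
      norm_num
      ring
    rw [e1, e2]
    ring
  have hdd : dOn i (insert i G) b H
      = expec (fun x => H (mergeOn G x (Function.update b i false))
          - H (mergeOn G x (Function.update b i true))) / 2 := by
    unfold dOn
    rw [he]
    unfold eOn
    rw [← expec_sub]
  rw [hiOn, hdd]
  have := sq_expec_le_expec_sq (fun x => H (mergeOn G x (Function.update b i false))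
      - H (mergeOn G x (Function.update b i true)))
  nlinarith [this]

/-- Efron–Stein inequality on a subcube. -/
lemma efron_stein (F : Finset (Fin n)) (b : X) (H : X → ℝ) :
    vOn F b H ≤ ∑ j ∈ F, iOn j F b H := by
  induction F using Finset.induction_on generalizing b with
  | empty => simp [vOn_empty]
  | @insert i G hiG ih =>
    have hins : i ∈ insert i G := Finset.mem_insert_self _ _
    have he : (insert i G).erase i = G := Finset.erase_insert hiG
    have hsplit := vOn_split hins b H
    rw [he] at hsplit
    rw [Finset.sum_insert hiG, hsplit]
    have hsum : (∑ j ∈ G, iOn j G (Function.update b i false) H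
          + ∑ j ∈ G, iOn j G (Function.update b i true) H) / 2
        = ∑ j ∈ G, iOn j (insert i G) b H := by
      rw [← Finset.sum_add_distrib, Finset.sum_div]
      apply Finset.sum_congr rfl
      intro j hj
      rw [iOn_split hiG j b H]
    have h1 := ih (Function.update b i false)
    have h2 := ih (Function.update b i true)
    have h3 := dsq_le_iOn hiG b H
    linarith [hsum.ge, hsum.le]

end Stmt11

namespace Stmt11

variable {n : ℕ}

local notation "X" => (Fin n → Bool)

lemma expec_div_const (f : X → ℝ) (c : ℝ) :
    expec (fun x => f x / c) = expec f / c := by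
  simp only [div_eq_mul_inv]
  exact expec_mul_const f c⁻¹

/-- tower property: averaging over `G` of subcube averages over `T` is the average over `G ∪ T`. -/
lemma eOn_tower {G T : Finset (Fin n)} (hdisj : Disjoint G T) (b : X) (H : X → ℝ) :
    eOn G b (fun y => eOn T y H) = eOn (G ∪ T) b H := by
  induction G using Finset.induction_on generalizing b with
  | empty => rw [eOn_empty, Finset.empty_union]
  | @insert i G hiG ih =>
    have hdisj' : Disjoint G T := by
      apply Finset.disjoint_of_subset_left (Finset.subset_insert i G) hdisj
    have hiT : i ∉ T := by
      intro h
      exact (Finset.disjoint_left.mp hdisj (Finset.mem_insert_self i G)) h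
    have hiGT : i ∉ G ∪ T := by
      simp [hiG, hiT]
    have hu : insert i G ∪ T = insert i (G ∪ T) := by
      rw [Finset.insert_union]
    rw [eOn_split (Finset.mem_insert_self i G) b, Finset.erase_insert hiG,
        ih hdisj', ih hdisj', hu,
        eOn_split (Finset.mem_insert_self i (G ∪ T)) b, Finset.erase_insert hiGT]

/-- the drop in second moment of subcube averages when enlarging the inner cube equals an influence. -/
lemma phi_diff {G T : Finset (Fin n)} {j : Fin n} (hjG : j ∈ G) (hjT : j ∉ T) (β : X)
    (H : X → ℝ) :
    eOn G β (fun b => (eOn T b H) ^ 2)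
      - eOn (G.erase j) β (fun b => (eOn (insert j T) b H) ^ 2)
      = iOn j G β (fun b => eOn T b H) := by
  classical
  set G' := G.erase j with hG'
  have hjG' : j ∉ G' := Finset.notMem_erase j G
  -- p and q : the two half means
  set p : X → ℝ := fun x => eOn T (Function.update (mergeOn G' x β) j false) H with hp
  set q : X → ℝ := fun x => eOn T (Function.update (mergeOn G' x β) j true) H with hq
  have key : ∀ (Φ : X → ℝ) (c : Bool), eOn G' (Function.update β j c) Φ
      = expec (fun x => Φ (Function.update (mergeOn G' x β) j c)) := by
    intro Φ c
    unfold eOn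
    congr 1
    funext x
    rw [mergeOn_update_base hjG']
  -- A
  have hA : eOn G β (fun b => (eOn T b H) ^ 2)
      = (expec (fun x => p x ^ 2) + expec (fun x => q x ^ 2)) / 2 := by
    rw [eOn_split hjG β, ← hG', key _ false, key _ true]
  -- B
  have hB : eOn G' β (fun b => (eOn (insert j T) b H) ^ 2)
      = expec (fun x => ((p x + q x) / 2) ^ 2) := by
    have inner : ∀ b : X, eOn (insert j T) b H
        = (eOn T (Function.update b j false) H + eOn T (Function.update b j true) H) / 2 := by
      intro b
      rw [eOn_split (Finset.mem_insert_self j T) b, Finset.erase_insert hjT]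
    have hfun : (fun b : X => (eOn (insert j T) b H) ^ 2)
        = fun b => ((eOn T (Function.update b j false) H
            + eOn T (Function.update b j true) H) / 2) ^ 2 := by
      funext b
      rw [inner]
    rw [hfun]
    rfl
  -- iOn
  have hI : iOn j G β (fun b => eOn T b H)
      = (expec (fun x => (p x - q x) ^ 2) + expec (fun x => (q x - p x) ^ 2)) / 8 := by
    unfold iOn
    rw [eOn_split hjG β, ← hG', key _ false, key _ true]
    have ef : (fun x => (fun y => (eOn T y H
          - eOn T (Function.update y j (!(y j))) H) ^ 2)
            (Function.update (mergeOn G' x β) j false))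
        = fun x => (p x - q x) ^ 2 := by
      funext x
      simp only [Function.update_self, Function.update_idem, Bool.not_false]
      rfl
    have et : (fun x => (fun y => (eOn T y H
          - eOn T (Function.update y j (!(y j))) H) ^ 2)
            (Function.update (mergeOn G' x β) j true))
        = fun x => (q x - p x) ^ 2 := by
      funext x
      simp only [Function.update_self, Function.update_idem, Bool.not_true]
      rfl
    rw [ef, et]
    ring
  rw [hA, hB, hI]
  have comb : ∀ (F1 F2 F3 F4 F5 : X → ℝ), (∀ x : X, (F1 x + F2 x)/2 - F3 x
      = (F4 x + F5 x)/8) → (expec F1 + expec F2)/2 - expec F3 = (expec F4 + expec F5)/8 := by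
    intro F1 F2 F3 F4 F5 hpt
    have e1 : expec (fun x => (F1 x + F2 x)/2 - F3 x)
        = (expec F1 + expec F2)/2 - expec F3 := by
      rw [expec_sub, expec_div_const, expec_add]
    have e2 : expec (fun x => (F4 x + F5 x)/8) = (expec F4 + expec F5)/8 := by
      rw [expec_div_const, expec_add]
    rw [← e1, ← e2]
    congr 1
    funext x
    exact hpt x
  exact comb _ _ _ _ _ (fun x => by ring)

end Stmt11

namespace Stmt11

variable {n : ℕ}

local notation "X" => (Fin n → Bool)

lemma eOn_sub (F : Finset (Fin n)) (b : X) (u v : X → ℝ) :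
    eOn F b (fun y => u y - v y) = eOn F b u - eOn F b v := by
  unfold eOn
  exact expec_sub _ _

lemma eOn_exists_ge (F : Finset (Fin n)) (b : X) (Ψ : X → ℝ) :
    ∃ y : X, eOn F b Ψ ≤ Ψ (mergeOn F y b) := by
  exact exists_ge_expec _

/-- greedy construction of a good inner set of any size `t ≤ k`. -/
lemma greedy (H : X → ℝ) (F : Finset (Fin n)) (β : X) (k : ℕ) (hk1 : 1 ≤ k)
    (hk : k ≤ F.card) :
    ∀ t, t ≤ k → ∃ T : Finset (Fin n), T ⊆ F ∧ T.card = t ∧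
      eOn (F \ T) β (fun b => (eOn T b H) ^ 2) - (eOn F β H) ^ 2
        ≤ (((F \ T).card : ℝ) / (F.card : ℝ)) * vOn F β H := by
  have hm1 : 1 ≤ F.card := le_trans hk1 hk
  have hmR : (0:ℝ) < (F.card : ℝ) := by exact_mod_cast Nat.lt_of_lt_of_le Nat.zero_lt_one hm1
  intro t
  induction t with
  | zero =>
    intro _
    refine ⟨∅, Finset.empty_subset F, Finset.card_empty, ?_⟩
    rw [Finset.sdiff_empty]
    have hfun : (fun b : X => (eOn (∅ : Finset (Fin n)) b H) ^ 2) = fun b => H b ^ 2 := by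
      funext b
      rw [eOn_empty]
    rw [hfun]
    have : eOn F β (fun b => H b ^ 2) - eOn F β H ^ 2 = vOn F β H := rfl
    rw [this, div_mul_eq_mul_div, le_div_iff₀ hmR]
    ring_nf
    exact le_refl _
  | succ t ih =>
    intro ht
    obtain ⟨T, hTF, hTcard, hbound⟩ := ih (le_of_lt (Nat.lt_of_succ_le ht))
    have hGcard : (F \ T).card = F.card - T.card := Finset.card_sdiff_of_subset hTF
    have hGpos : 0 < (F \ T).card := by
      rw [hGcard, hTcard]
      omega
    have hGne : (F \ T).Nonempty := Finset.card_pos.mp hGpos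
    have hGR : (0:ℝ) < ((F \ T).card : ℝ) := by exact_mod_cast hGpos
    set V := vOn F β H with hV
    set A := eOn F β H with hA
    set W := eOn (F \ T) β (fun b => (eOn T b H) ^ 2) - A ^ 2 with hW
    -- W is the variance of the subcube-mean function, so nonnegative
    have hdisj : Disjoint (F \ T) T := Finset.sdiff_disjoint
    have hunion : (F \ T) ∪ T = F := Finset.sdiff_union_of_subset hTF
    have hmean : eOn (F \ T) β (fun b => eOn T b H) = A := by
      rw [eOn_tower hdisj, hunion]
    have hWvar : W = vOn (F \ T) β (fun b => eOn T b H) := by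
      rw [hW, ← hmean]
      rfl
    have hWnn : 0 ≤ W := by
      rw [hWvar]
      exact vOn_nonneg _ _ _
    -- Efron-Stein + phi_diff: the total drop available is at least W
    have hES : W ≤ ∑ j ∈ F \ T, (eOn (F \ T) β (fun b => (eOn T b H) ^ 2)
        - eOn ((F \ T).erase j) β (fun b => (eOn (insert j T) b H) ^ 2)) := by
      rw [hWvar]
      refine le_trans (efron_stein (F \ T) β _) ?_
      apply le_of_eq
      apply Finset.sum_congr rfl
      intro j hj
      have hjG : j ∈ F \ T := hj
      have hjT : j ∉ T := (Finset.mem_sdiff.mp hj).2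
      rw [phi_diff hjG hjT]
    -- pigeonhole: some coordinate j provides a drop of at least W / |G|
    have hpig : ∃ j ∈ F \ T, W / ((F \ T).card : ℝ)
        ≤ eOn (F \ T) β (fun b => (eOn T b H) ^ 2)
          - eOn ((F \ T).erase j) β (fun b => (eOn (insert j T) b H) ^ 2) := by
      by_contra hcon
      push_neg at hcon
      have hsum : ∑ j ∈ F \ T, (eOn (F \ T) β (fun b => (eOn T b H) ^ 2)
          - eOn ((F \ T).erase j) β (fun b => (eOn (insert j T) b H) ^ 2))
          < ∑ _j ∈ F \ T, W / ((F \ T).card : ℝ) := by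
        apply Finset.sum_lt_sum_of_nonempty hGne
        intro j hj
        exact hcon j hj
      rw [Finset.sum_const, nsmul_eq_mul] at hsum
      have : ((F \ T).card : ℝ) * (W / ((F \ T).card : ℝ)) = W := by
        field_simp
      rw [this] at hsum
      linarith [hES, hsum]
    obtain ⟨j, hjG, hdrop⟩ := hpig
    have hjF : j ∈ F := (Finset.mem_sdiff.mp hjG).1
    have hjT : j ∉ T := (Finset.mem_sdiff.mp hjG).2
    refine ⟨insert j T, Finset.insert_subset hjF hTF, ?_, ?_⟩
    · rw [Finset.card_insert_of_notMem hjT, hTcard]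
    · have hsd : F \ insert j T = (F \ T).erase j := Finset.sdiff_insert F T j
      rw [hsd]
      -- new bound
      have hstep : eOn ((F \ T).erase j) β (fun b => (eOn (insert j T) b H) ^ 2) - A ^ 2
          ≤ W - W / ((F \ T).card : ℝ) := by
        have : eOn ((F \ T).erase j) β (fun b => (eOn (insert j T) b H) ^ 2)
            ≤ eOn (F \ T) β (fun b => (eOn T b H) ^ 2) - W / ((F \ T).card : ℝ) := by
          linarith [hdrop]
        rw [hW]
        linarith [this]
      have hcard' : (((F \ T).erase j).card : ℝ) = ((F \ T).card : ℝ) - 1 := by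
        rw [Finset.card_erase_of_mem hjG]
        have : 1 ≤ (F \ T).card := hGpos
        push_cast [Nat.cast_sub this]
        ring
      rw [hcard']
      have hWle : W ≤ (((F \ T).card : ℝ) / (F.card : ℝ)) * V := hbound
      have hfactor : W - W / ((F \ T).card : ℝ)
          = W * (1 - 1 / ((F \ T).card : ℝ)) := by ring
      have hfnn : 0 ≤ 1 - 1 / ((F \ T).card : ℝ) := by
        have : 1 / ((F \ T).card : ℝ) ≤ 1 := by
          rw [div_le_one hGR]
          exact_mod_cast hGpos
        linarith
      calc eOn ((F \ T).erase j) β (fun b => (eOn (insert j T) b H) ^ 2) - A ^ 2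
          ≤ W * (1 - 1 / ((F \ T).card : ℝ)) := by rw [← hfactor]; exact hstep
        _ ≤ (((F \ T).card : ℝ) / (F.card : ℝ)) * V * (1 - 1 / ((F \ T).card : ℝ)) :=
            mul_le_mul_of_nonneg_right hWle hfnn
        _ = ((((F \ T).card : ℝ) - 1) / (F.card : ℝ)) * V := by
            field_simp

end Stmt11

namespace Stmt11

variable {n : ℕ}

local notation "X" => (Fin n → Bool)

/-- extraction: a subcube of dimension `k` whose variance is at least a `k/m` fraction. -/
lemma avg_extract (H : X → ℝ) (F : Finset (Fin n)) (β : X) (k : ℕ) (hk1 : 1 ≤ k)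
    (hk : k ≤ F.card) :
    ∃ T : Finset (Fin n), T ⊆ F ∧ T.card = k ∧
      ∃ b : X, ((k : ℝ) / (F.card : ℝ)) * vOn F β H ≤ vOn T b H := by
  obtain ⟨T, hTF, hTcard, hbound⟩ := greedy H F β k hk1 hk k (le_refl k)
  have hm1 : 1 ≤ F.card := le_trans hk1 hk
  have hmR : (0:ℝ) < (F.card : ℝ) := by
    exact_mod_cast Nat.lt_of_lt_of_le Nat.zero_lt_one hm1
  have hdisj : Disjoint (F \ T) T := Finset.sdiff_disjoint
  have hunion : (F \ T) ∪ T = F := Finset.sdiff_union_of_subset hTF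
  have hGcard : (((F \ T).card : ℝ)) = (F.card : ℝ) - (k : ℝ) := by
    rw [Finset.card_sdiff_of_subset hTF, hTcard]
    have : k ≤ F.card := hk
    push_cast [Nat.cast_sub this]
    ring
  have hkey : ((k : ℝ) / (F.card : ℝ)) * vOn F β H
      ≤ eOn (F \ T) β (fun b => vOn T b H) := by
    have e1 : eOn (F \ T) β (fun b => vOn T b H)
        = eOn (F \ T) β (fun b => eOn T b (fun y => H y ^ 2))
          - eOn (F \ T) β (fun b => (eOn T b H) ^ 2) := by
      rw [← eOn_sub]
      rfl
    rw [e1, eOn_tower hdisj, hunion]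
    have hb := hbound
    rw [hGcard] at hb
    have hV : vOn F β H = eOn F β (fun y => H y ^ 2) - (eOn F β H) ^ 2 := rfl
    have : eOn (F \ T) β (fun b => (eOn T b H) ^ 2)
        ≤ (eOn F β H) ^ 2 + (((F.card : ℝ) - k) / (F.card : ℝ)) * vOn F β H := by
      linarith [hb]
    have harith : ((k : ℝ) / (F.card : ℝ)) * vOn F β H
        = vOn F β H - (((F.card : ℝ) - k) / (F.card : ℝ)) * vOn F β H := by
      field_simp
      ring
    rw [harith]
    linarith [this, hV.ge, hV.le]
  obtain ⟨y, hy⟩ := eOn_exists_ge (F \ T) β (fun b => vOn T b H)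
  exact ⟨T, hTF, hTcard, mergeOn (F \ T) y β, le_trans hkey hy⟩

end Stmt11

namespace Stmt11

variable {n : ℕ}

local notation "X" => (Fin n → Bool)

lemma expec_odd_zero (f : X → ℝ) (hodd : ∀ x, f (fun i => !(x i)) = - f x) :
    expec f = 0 := by
  have hinv : Function.Involutive (fun x : X => (fun i => !(x i) : X)) := by
    intro x; funext i; simp
  have h1 : ∑ x : X, f (fun i => !(x i)) = ∑ x : X, f x :=
    Fintype.sum_bijective _ hinv.bijective _ _ (fun x => rfl)
  have h2 : ∑ x : X, f (fun i => !(x i)) = ∑ x : X, (- f x) := by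
    apply Finset.sum_congr rfl
    intro x _
    exact hodd x
  rw [h2, Finset.sum_neg_distrib] at h1
  have : ∑ x : X, f x = 0 := by linarith
  rw [expec, this, zero_div]

lemma drift {F : Finset (Fin n)} {i : Fin n} (hi : i ∈ F) (b : X) (H : X → ℝ) :
    |eOn (F.erase i) b H - eOn F b H| = |dOn i F b H| := by
  have hsplit := eOn_split hi b H
  have hb : Function.update b i (b i) = b := Function.update_eq_self i b
  unfold dOn
  cases hbi : b i with
  | false =>
    have : eOn (F.erase i) b H = eOn (F.erase i) (Function.update b i false) H := by
      rw [← hbi, hb]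
    rw [this, hsplit]
    rw [show eOn (F.erase i) (Function.update b i false) H
        - (eOn (F.erase i) (Function.update b i false) H
          + eOn (F.erase i) (Function.update b i true) H) / 2
      = (eOn (F.erase i) (Function.update b i false) H
          - eOn (F.erase i) (Function.update b i true) H) / 2 by ring]
  | true =>
    have : eOn (F.erase i) b H = eOn (F.erase i) (Function.update b i true) H := by
      rw [← hbi, hb]
    rw [this, hsplit]
    rw [show eOn (F.erase i) (Function.update b i true) H
        - (eOn (F.erase i) (Function.update b i false) H
          + eOn (F.erase i) (Function.update b i true) H) / 2
      = -((eOn (F.erase i) (Function.update b i false) H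
          - eOn (F.erase i) (Function.update b i true) H) / 2) by ring]
    rw [abs_neg]

lemma singleton_var (i : Fin n) (b : X) (H : X → ℝ) :
    vOn {i} b H = (H b - eOn {i} b H) ^ 2 := by
  have hi : i ∈ ({i} : Finset (Fin n)) := Finset.mem_singleton_self i
  have he : ({i} : Finset (Fin n)).erase i = ∅ := Finset.erase_singleton i
  have hsplit := vOn_split hi b H
  rw [he, vOn_empty, vOn_empty] at hsplit
  have hmean := eOn_split hi b H
  rw [he, eOn_empty, eOn_empty] at hmean
  have hd : dOn i {i} b H
      = (H (Function.update b i false) - H (Function.update b i true)) / 2 := by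
    unfold dOn
    rw [he, eOn_empty, eOn_empty]
  have hb : Function.update b i (b i) = b := Function.update_eq_self i b
  rw [hsplit, hd, hmean]
  cases hbi : b i with
  | false =>
    rw [show H b = H (Function.update b i false) by rw [← hbi, hb]]
    ring
  | true =>
    rw [show H b = H (Function.update b i true) by rw [← hbi, hb]]
    ring

lemma le_of_sq_le_sq {a b : ℝ} (ha : 0 ≤ a) (hb : 0 ≤ b) (h : a ^ 2 ≤ b ^ 2) : a ≤ b := by
  nlinarith

lemma sqrt_step (m : ℕ) (hm : 1 ≤ m) :
    1 / Real.sqrt (m : ℝ) ≤ 2 * Real.sqrt (m : ℝ) - 2 * Real.sqrt ((m : ℝ) - 1) := by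
  have hm1 : (1:ℝ) ≤ (m:ℝ) := by exact_mod_cast hm
  have hmpos : (0:ℝ) < Real.sqrt (m:ℝ) := Real.sqrt_pos.mpr (by linarith)
  have hms : Real.sqrt (m:ℝ) * Real.sqrt (m:ℝ) = (m:ℝ) :=
    Real.mul_self_sqrt (by linarith)
  have key : Real.sqrt ((m:ℝ) - 1) * Real.sqrt (m:ℝ) ≤ (m:ℝ) - 1/2 := by
    rw [← Real.sqrt_mul (by linarith : (0:ℝ) ≤ (m:ℝ) - 1)]
    calc Real.sqrt (((m:ℝ) - 1) * (m:ℝ)) ≤ Real.sqrt (((m:ℝ) - 1/2)^2) := by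
          apply Real.sqrt_le_sqrt
          nlinarith
      _ = (m:ℝ) - 1/2 := Real.sqrt_sq (by linarith)
  rw [div_le_iff₀ hmpos]
  nlinarith [key, hms]

end Stmt11

open Stmt11

theorem stmt_11 (n k : ℕ) (hk1 : 1 ≤ k) (hkn : k ≤ n) (f : (Fin n → Bool) → ℝ)
    (hodd : ∀ x, f (fun i => !(x i)) = - f x) (M : ℝ)
    (hM : M = univ.sup' Finset.univ_nonempty fun x : Fin n → Bool => |f x|)
    (hMpos : 0 < M) :
    ∃ T : Finset (Fin n), T.card ≤ k ∧
      ∃ b : Fin n → Bool,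
        cubeVar (fun x => f (mergeOn T x b)) ≥ M ^ 2 * k / (4 * n ^ 2) := by
  classical
  by_contra hcon
  push_neg at hcon
  set θ : ℝ := M ^ 2 * k / (4 * n ^ 2) with hθ
  have hn1 : 1 ≤ n := le_trans hk1 hkn
  have hnR : (1:ℝ) ≤ (n:ℝ) := by exact_mod_cast hn1
  have hnpos : (0:ℝ) < (n:ℝ) := by linarith
  have hkR : (1:ℝ) ≤ (k:ℝ) := by exact_mod_cast hk1
  have hknR : (k:ℝ) ≤ (n:ℝ) := by exact_mod_cast hkn
  have hθpos : 0 < θ := by rw [hθ]; positivity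
  have hg : ∀ T : Finset (Fin n), T.card ≤ k → ∀ b, vOn T b f < θ := by
    intro T hT b
    have := hcon T hT b
    rwa [vOn_eq_cubeVar] at this
  obtain ⟨xs, _, hxs⟩ := Finset.exists_mem_eq_sup'
    (Finset.univ_nonempty : (Finset.univ : Finset (Fin n → Bool)).Nonempty)
    (fun x : Fin n → Bool => |f x|)
  have hMxs : M = |f xs| := by rw [hM, hxs]
  have hE0 : expec f = 0 := expec_odd_zero f hodd
  set B : ℝ := Real.sqrt θ with hB
  have hBpos : 0 < B := Real.sqrt_pos.mpr hθpos
  have hB2 : B ^ 2 = θ := Real.sq_sqrt (le_of_lt hθpos)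
  have hBk : B * Real.sqrt (k:ℝ) = M * k / (2 * n) := by
    rw [hB, ← Real.sqrt_mul (le_of_lt hθpos)]
    have hid : θ * (k:ℝ) = (M * k / (2*n))^2 := by
      rw [hθ]; field_simp; ring
    rw [hid, Real.sqrt_sq (by positivity)]
  -- Phase 1 : zoom from the full cube down to dimension k
  have P1 : ∀ t, t ≤ n - k → ∃ F : Finset (Fin n), F.card = n - t ∧
      M - |f xs - eOn F xs f| ≤ (t : ℝ) * (M / (2 * n)) := by
    intro t
    induction t with
    | zero =>
      intro _
      refine ⟨Finset.univ, by rw [Finset.card_univ, Fintype.card_fin]; omega, ?_⟩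
      rw [eOn_univ, hE0, sub_zero, ← hMxs]
      norm_num
    | succ t ih =>
      intro ht
      obtain ⟨F, hFcard, hFbound⟩ := ih (by omega)
      have hmk : k + 1 ≤ F.card := by omega
      have hm1 : 1 ≤ F.card := by omega
      have hmRpos : (0:ℝ) < (F.card : ℝ) := by exact_mod_cast hm1
      by_cases hv : vOn F xs f < (F.card : ℝ) * (M ^ 2 / (4 * (n:ℝ) ^ 2))
      · -- zoom one coordinate
        have hbes := bessel F xs f
        have hsum : ∑ i ∈ F, (dOn i F xs f) ^ 2
            < ∑ _i ∈ F, M ^ 2 / (4 * (n:ℝ) ^ 2) := by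
          rw [Finset.sum_const, nsmul_eq_mul]
          exact lt_of_le_of_lt hbes hv
        obtain ⟨i, hiF, hid⟩ := Finset.exists_lt_of_sum_lt hsum
        have hdle : |dOn i F xs f| ≤ M / (2 * n) := by
          apply Stmt11.le_of_sq_le_sq (abs_nonneg _) (by positivity)
          rw [sq_abs]
          calc (dOn i F xs f)^2 ≤ M ^2/(4*(n:ℝ)^2) := le_of_lt hid
            _ = (M/(2*n))^2 := by field_simp; ring
        refine ⟨F.erase i, ?_, ?_⟩
        · rw [Finset.card_erase_of_mem hiF, hFcard]
          omega
        · have hdrift := drift hiF xs f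
          have habs : |f xs - eOn F xs f| - |f xs - eOn (F.erase i) xs f|
              ≤ |dOn i F xs f| := by
            calc |f xs - eOn F xs f| - |f xs - eOn (F.erase i) xs f|
                ≤ |(f xs - eOn F xs f) - (f xs - eOn (F.erase i) xs f)| :=
                  abs_sub_abs_le_abs_sub _ _
              _ = |eOn (F.erase i) xs f - eOn F xs f| := by
                  congr 1
                  ring
              _ = |dOn i F xs f| := hdrift
          have hexp : ((t:ℝ) + 1) * (M/(2*(n:ℝ)))
              = (t:ℝ) * (M/(2*(n:ℝ))) + M/(2*(n:ℝ)) := by ring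
          push_cast
          rw [hexp]
          linarith [hFbound, hdle, habs]
      · -- stuck: use the averaging extraction, contradiction
        exfalso
        push_neg at hv
        obtain ⟨T, hTF, hTcard, b, hTvar⟩ := avg_extract f F xs k hk1 (by omega)
        have hge : θ ≤ vOn T b f := by
          calc θ = ((k:ℝ)/(F.card:ℝ)) * ((F.card:ℝ) * (M^2/(4*(n:ℝ)^2))) := by
                rw [hθ]
                field_simp
            _ ≤ ((k:ℝ)/(F.card:ℝ)) * vOn F xs f := by
                apply mul_le_mul_of_nonneg_left hv (by positivity)
            _ ≤ vOn T b f := hTvar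
        exact absurd (hg T (le_of_eq hTcard) b) (not_lt.mpr hge)
  -- Phase 2 : zoom from dimension k down to dimension 1
  have P2 : ∀ s, s ≤ k - 1 → ∃ F : Finset (Fin n), F.card = k - s ∧
      M - |f xs - eOn F xs f| ≤ ((n:ℝ) - k) * (M / (2 * n))
        + 2*B*Real.sqrt (k:ℝ) - 2*B*Real.sqrt ((k:ℝ) - s) := by
    intro s
    induction s with
    | zero =>
      intro _
      obtain ⟨F, hFcard, hFbound⟩ := P1 (n - k) (le_refl _)
      refine ⟨F, by omega, ?_⟩
      have hcast : ((n - k : ℕ) : ℝ) = (n:ℝ) - k := by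
        push_cast [Nat.cast_sub hkn]
        ring
      rw [hcast] at hFbound
      push_cast
      simp only [sub_zero]
      linarith [hFbound]
    | succ s ih =>
      intro hs
      obtain ⟨F, hFcard, hFbound⟩ := ih (by omega)
      have hm2 : 2 ≤ F.card := by omega
      have hm1 : 1 ≤ F.card := by omega
      have hmk : F.card ≤ k := by omega
      have hmRpos : (0:ℝ) < (F.card : ℝ) := by exact_mod_cast hm1
      by_cases hv : vOn F xs f < θ
      · -- zoom one coordinate
        have hbes := bessel F xs f
        have hsum : ∑ i ∈ F, (dOn i F xs f) ^ 2
            < ∑ _i ∈ F, θ / (F.card : ℝ) := by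
          rw [Finset.sum_const, nsmul_eq_mul]
          have : (F.card : ℝ) * (θ / (F.card : ℝ)) = θ := by field_simp
          rw [this]
          exact lt_of_le_of_lt hbes hv
        obtain ⟨i, hiF, hid⟩ := Finset.exists_lt_of_sum_lt hsum
        have hsm : (0:ℝ) < Real.sqrt (F.card : ℝ) := Real.sqrt_pos.mpr hmRpos
        have hdle : |dOn i F xs f| ≤ B / Real.sqrt (F.card : ℝ) := by
          apply Stmt11.le_of_sq_le_sq (abs_nonneg _) (by positivity)
          rw [sq_abs, div_pow, hB2, Real.sq_sqrt (le_of_lt hmRpos)]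
          exact le_of_lt hid
        have hstep : B / Real.sqrt (F.card : ℝ)
            ≤ 2*B*Real.sqrt ((F.card : ℝ)) - 2*B*Real.sqrt ((F.card : ℝ) - 1) := by
          have h0 := sqrt_step F.card hm1
          have h1 : B * (1 / Real.sqrt (F.card:ℝ))
              ≤ B * (2 * Real.sqrt ((F.card:ℝ)) - 2 * Real.sqrt ((F.card:ℝ) - 1)) :=
            mul_le_mul_of_nonneg_left h0 (le_of_lt hBpos)
          calc B / Real.sqrt (F.card : ℝ) = B * (1 / Real.sqrt (F.card:ℝ)) := by ring
            _ ≤ B * (2 * Real.sqrt ((F.card:ℝ)) - 2 * Real.sqrt ((F.card:ℝ) - 1)) := h1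
            _ = 2*B*Real.sqrt ((F.card : ℝ)) - 2*B*Real.sqrt ((F.card : ℝ) - 1) := by ring
        refine ⟨F.erase i, ?_, ?_⟩
        · rw [Finset.card_erase_of_mem hiF, hFcard]
          omega
        · have hdrift := drift hiF xs f
          have habs : |f xs - eOn F xs f| - |f xs - eOn (F.erase i) xs f|
              ≤ |dOn i F xs f| := by
            calc |f xs - eOn F xs f| - |f xs - eOn (F.erase i) xs f|
                ≤ |(f xs - eOn F xs f) - (f xs - eOn (F.erase i) xs f)| :=
                  abs_sub_abs_le_abs_sub _ _
              _ = |eOn (F.erase i) xs f - eOn F xs f| := by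
                  congr 1
                  ring
              _ = |dOn i F xs f| := hdrift
          -- cast bookkeeping : (F.card : ℝ) = k - s
          have hcast1 : ((F.card : ℕ) : ℝ) = (k:ℝ) - s := by
            rw [hFcard]
            have hsk : s ≤ k := by omega
            push_cast [Nat.cast_sub hsk]
            ring
          have hcast2 : ((k:ℝ) - (s+1)) = ((F.card : ℝ) - 1) := by
            rw [hcast1]; ring
          push_cast
          rw [hcast2]
          rw [← hcast1] at hFbound
          linarith [hFbound, hdle, habs, hstep]
      · exfalso
        exact absurd (hg F hmk xs) hv
  -- conclusion: at dimension 1 the variance must already be large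
  obtain ⟨F, hFcard, hFbound⟩ := P2 (k - 1) (le_refl _)
  have hF1 : F.card = 1 := by omega
  obtain ⟨i, hi⟩ := Finset.card_eq_one.mp hF1
  subst hi
  have hcast : ((k:ℝ) - ((k - 1 : ℕ) : ℝ)) = 1 := by
    push_cast [Nat.cast_sub hk1]
    ring
  rw [hcast, Real.sqrt_one] at hFbound
  have h2Bk : 2 * B * Real.sqrt (k:ℝ) = M * k / n := by
    rw [show 2 * B * Real.sqrt (k:ℝ) = 2 * (B * Real.sqrt (k:ℝ)) by ring, hBk]
    field_simp
  rw [h2Bk] at hFbound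
  have hkey : M - ((n:ℝ) - k) * (M/(2*n)) - M*k/n = M*((n:ℝ)-k)/(2*n) := by
    field_simp
    ring
  have hnk0 : 0 ≤ M*((n:ℝ)-k)/(2*n) := by
    apply div_nonneg
    · apply mul_nonneg (le_of_lt hMpos)
      linarith
    · linarith
  have hLam : B ≤ |f xs - eOn {i} xs f| := by
    nlinarith [hFbound, hkey, hnk0, hBpos]
  have hvar : θ ≤ vOn {i} xs f := by
    rw [singleton_var i xs f]
    calc θ = B ^ 2 := hB2.symm
      _ ≤ |f xs - eOn {i} xs f| ^ 2 := by
          apply pow_le_pow_left₀ (le_of_lt hBpos) hLam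
      _ = (f xs - eOn {i} xs f) ^ 2 := sq_abs _
  have hcard1 : ({i} : Finset (Fin n)).card ≤ k := by
    rw [Finset.card_singleton]
    exact hk1
  exact absurd (hg {i} hcard1 xs) (not_lt.mpr hvar)
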